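/- Let φ : X → H be weakly measurable. If F is a continuous linear functional on V_φ(X,μ) (with respect to ‖·‖_φ), then there exists a unique g in the closure of the range of T̂_φ such that F([ξ]_φ) = ∫_X ξ(x)⟨φ(x),g⟩ dμ(x) for all ξ ∈ 𝒱_φ(X,μ), and ‖F‖_{φ*} = ‖g‖, where ‖·‖_{φ*} is the dual norm. Conversely, every g ∈ H defines by this formula a bounded linear functional F on V_φ(X,μ) with ‖F‖_{φ*} ≤ ‖g‖, and if g lies in the range of T̂_φ then ‖F‖_{φ*} = ‖g‖. -/

import Mathlib

open MeasureTheory Filter Topology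
open scoped Classical ENNReal NNReal

noncomputable section

variable {H : Type*} [NormedAddCommGroup H] [InnerProductSpace ℂ H] [CompleteSpace H]
  [TopologicalSpace.SeparableSpace H]
variable {X : Type*} [TopologicalSpace X] [LocallyCompactSpace X] [MeasurableSpace X]
  [BorelSpace X]

/-- Notation for the Mathlib inner product (conjugate-linear in the first slot);
the paper's inner product `⟨f, g⟩` (linear in the first slot) is `⟪g, f⟫`. -/
local notation "⟪" x ", " y "⟫" => @inner ℂ _ _ x y

/-- `φ : X → H` is weakly measurable: `x ↦ ⟨f, φ x⟩` is measurable for every `f ∈ H`. -/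
def WeaklyMeasurable (φ : X → H) : Prop :=
  ∀ f : H, Measurable fun x => ⟪φ x, f⟫

/-- `ξ ∈ 𝒱_φ(X,μ)`: `ξ` is measurable, the integral `∫ ξ(x) ⟨φ(x), g⟩ dμ(x)` exists for all
`g ∈ H`, and it defines a bounded conjugate-linear functional of `g`. -/
def MemV (μ : Measure X) (φ : X → H) (ξ : X → ℂ) : Prop :=
  Measurable ξ ∧ (∀ g : H, Integrable (fun x => ξ x * ⟪g, φ x⟫) μ) ∧
    ∃ c : ℝ, ∀ g : H, ‖∫ x, ξ x * ⟪g, φ x⟫ ∂μ‖ ≤ c * ‖g‖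

/-- The map `T_φ : 𝒱_φ(X,μ) → H`, determined weakly by
`⟨T_φ ξ, g⟩ = ∫ ξ(x) ⟨φ(x), g⟩ dμ(x)` for all `g ∈ H` (junk value `0` off `𝒱_φ`). -/
def Tmap (μ : Measure X) (φ : X → H) (ξ : X → ℂ) : H :=
  if h : MemV μ φ ξ then
    have key : ∀ g : H, Integrable (fun x => (starRingEnd ℂ) (ξ x) * ⟪φ x, g⟫) μ := by
      intro g
      have h2 : Integrable (fun x => (RCLike.conjLIE : ℂ ≃ₗᵢ[ℝ] ℂ) (ξ x * ⟪g, φ x⟫)) μ :=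
        ((RCLike.conjLIE : ℂ ≃ₗᵢ[ℝ] ℂ).integrable_comp_iff).2 (h.2.1 g)
      simpa [RCLike.conjLIE_apply, map_mul] using h2
    (InnerProductSpace.toDual ℂ H).symm
      (LinearMap.mkContinuousOfExistsBound
        { toFun := fun g => ∫ x, (starRingEnd ℂ) (ξ x) * ⟪φ x, g⟫ ∂μ
          map_add' := fun g g' => by
            simp only [inner_add_right, mul_add]
            exact integral_add (key g) (key g')
          map_smul' := fun c g => by
            simp only [inner_smul_right, RingHom.id_apply]
            calc ∫ x, (starRingEnd ℂ) (ξ x) * (c * ⟪φ x, g⟫) ∂μ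
                = ∫ x, c * ((starRingEnd ℂ) (ξ x) * ⟪φ x, g⟫) ∂μ := by
                  simp only [mul_left_comm]
              _ = c * ∫ x, (starRingEnd ℂ) (ξ x) * ⟪φ x, g⟫ ∂μ := by rw [integral_const_mul] }
        (by
          obtain ⟨c, hc⟩ := h.2.2
          refine ⟨c, fun g => ?_⟩
          have he : ∫ x, (starRingEnd ℂ) (ξ x) * ⟪φ x, g⟫ ∂μ
              = (starRingEnd ℂ) (∫ x, ξ x * ⟪g, φ x⟫ ∂μ) := by
            rw [← integral_conj]
            congr 1; funext x
            simp [map_mul]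
          simp only [LinearMap.coe_mk, AddHom.coe_mk]
          rw [he, RCLike.norm_conj]
          exact hc g))
  else 0

/-- The norm `‖[ξ]_φ‖_φ = sup_{‖g‖ ≤ 1} |∫ ξ(x) ⟨φ(x), g⟩ dμ(x)|` (computed on a
representative; it only depends on the class `[ξ]_φ = ξ + Ker T_φ`). -/
def Vnorm (μ : Measure X) (φ : X → H) (ξ : X → ℂ) : ℝ :=
  ⨆ g : {g : H // ‖g‖ ≤ 1}, ‖∫ x, ξ x * ⟪(g : H), φ x⟫ ∂μ‖

/-- The range of `T̂_φ : V_φ(X,μ) → H` (equivalently, of `T_φ` on `𝒱_φ(X,μ)`). -/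
def Tran (μ : Measure X) (φ : X → H) : Set H := Tmap μ φ '' {ξ | MemV μ φ ξ}

/-- The analysis coefficient map: `(C_ψ f)(x) = ⟨f, ψ(x)⟩`. -/
def Cpsi (ψ : X → H) (f : H) : X → ℂ := fun x => ⟪ψ x, f⟫

/-- `φ` is `μ`-total: `Ker C_φ = {0}`, i.e. if `∫ ξ(x) ⟨φ(x), f⟩ dμ(x) = 0` for every
`ξ ∈ 𝒱_φ(X,μ)`, then `f = 0`. -/
def MuTotal (μ : Measure X) (φ : X → H) : Prop :=
  ∀ f : H, (∀ ξ, MemV μ φ ξ → ∫ x, ξ x * ⟪f, φ x⟫ ∂μ = 0) → f = 0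

/-- `S : H ≃L[ℂ] H` represents the sesquilinear form `Ω_{ψ,φ}`:
`⟨S f, g⟩ = ∫ ⟨f, ψ(x)⟩ ⟨φ(x), g⟩ dμ(x)` for all `f, g ∈ H`. -/
def IsAnalysisOp (μ : Measure X) (ψ φ : X → H) (S : H ≃L[ℂ] H) : Prop :=
  ∀ f g : H, ⟪g, S f⟫ = ∫ x, ⟪ψ x, f⟫ * ⟪g, φ x⟫ ∂μ

/-- `(ψ, φ)` is a reproducing pair: both weakly measurable, the form
`Ω_{ψ,φ}(f,g) = ∫ ⟨f,ψ(x)⟩⟨φ(x),g⟩ dμ(x)` is well defined (integrable) and bounded, and the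
associated bounded operator `S_{ψ,φ}` has a bounded everywhere-defined inverse. -/
def IsReproducingPair (μ : Measure X) (ψ φ : X → H) : Prop :=
  WeaklyMeasurable ψ ∧ WeaklyMeasurable φ ∧
    (∀ f g : H, Integrable (fun x => ⟪ψ x, f⟫ * ⟪g, φ x⟫) μ) ∧
    ∃ S : H ≃L[ℂ] H, IsAnalysisOp μ ψ φ S

/-- Completeness of `V_φ(X,μ)` in the norm `‖·‖_φ`, phrased via representatives:
every `‖·‖_φ`-Cauchy sequence of elements of `𝒱_φ(X,μ)` converges in `‖·‖_φ`
to an element of `𝒱_φ(X,μ)`. -/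
def VComplete (μ : Measure X) (φ : X → H) : Prop :=
  ∀ ξ : ℕ → X → ℂ, (∀ n, MemV μ φ (ξ n)) →
    (∀ ε : ℝ, 0 < ε → ∃ N, ∀ m ≥ N, ∀ n ≥ N, Vnorm μ φ (ξ m - ξ n) < ε) →
    ∃ η, MemV μ φ η ∧ Tendsto (fun n => Vnorm μ φ (ξ n - η)) atTop (𝓝 0)

/-- `F` is (induced by) a bounded linear functional on `V_φ(X,μ)`: it is linear on `𝒱_φ(X,μ)`,
constant on the classes of `V_φ(X,μ) = 𝒱_φ(X,μ)/Ker T_φ`, and bounded for `‖·‖_φ`. -/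
def IsBddLinearFunctional (μ : Measure X) (φ : X → H) (F : (X → ℂ) → ℂ) : Prop :=
  (∀ ξ η, MemV μ φ ξ → MemV μ φ η → F (ξ + η) = F ξ + F η) ∧
  (∀ (c : ℂ) ξ, MemV μ φ ξ → F (c • ξ) = c * F ξ) ∧
  (∀ ξ η, MemV μ φ ξ → MemV μ φ η → Tmap μ φ (ξ - η) = 0 → F ξ = F η) ∧
  ∃ c : ℝ, ∀ ξ, MemV μ φ ξ → ‖F ξ‖ ≤ c * Vnorm μ φ ξ

/-- The dual norm `‖F‖_{φ*} = sup_{‖[ξ]_φ‖_φ ≤ 1} |F([ξ]_φ)|`. -/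
def DualNorm (μ : Measure X) (φ : X → H) (F : (X → ℂ) → ℂ) : ℝ :=
  ⨆ ξ : {ξ : X → ℂ // MemV μ φ ξ ∧ Vnorm μ φ ξ ≤ 1}, ‖F ξ.1‖

/-- `V_φ(X,μ)` and `V_ψ(X,μ)` are conjugate dual to each other with respect to the pairing
`⟨⟨ξ, η⟩⟩ = ∫ ξ(x) conj(η(x)) dμ(x)`: the pairing is well defined, each class `[η]_ψ` gives a
bounded linear functional on `V_φ(X,μ)`, and `[η]_ψ ↦ ⟨⟨·, η⟩⟩` is a bijection from `V_ψ(X,μ)`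
onto the dual of `V_φ(X,μ)`. -/
def ConjDual (μ : Measure X) (φ ψ : X → H) : Prop :=
  (∀ ξ η, MemV μ φ ξ → MemV μ ψ η →
      Integrable (fun x => ξ x * (starRingEnd ℂ) (η x)) μ) ∧
  (∀ η, MemV μ ψ η →
      IsBddLinearFunctional μ φ (fun ξ => ∫ x, ξ x * (starRingEnd ℂ) (η x) ∂μ)) ∧
  (∀ η η', MemV μ ψ η → MemV μ ψ η' →
      (∀ ξ, MemV μ φ ξ →
        ∫ x, ξ x * (starRingEnd ℂ) (η x) ∂μ = ∫ x, ξ x * (starRingEnd ℂ) (η' x) ∂μ) →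
      Tmap μ ψ (η - η') = 0) ∧
  (∀ F, IsBddLinearFunctional μ φ F →
      ∃ η, MemV μ ψ η ∧ ∀ ξ, MemV μ φ ξ → F ξ = ∫ x, ξ x * (starRingEnd ℂ) (η x) ∂μ)

set_option linter.unusedSectionVars false
set_option linter.unnecessarySimpa false
set_option maxHeartbeats 1000000

-- ============ my lemmas ============

theorem inner_Tmap {μ : Measure X} {φ : X → H} {ξ : X → ℂ} (h : MemV μ φ ξ) (g : H) :
    ⟪g, Tmap μ φ ξ⟫ = ∫ x, ξ x * ⟪g, φ x⟫ ∂μ := by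
  have h1 : ⟪Tmap μ φ ξ, g⟫ = ∫ x, (starRingEnd ℂ) (ξ x) * ⟪φ x, g⟫ ∂μ := by
    unfold Tmap
    rw [dif_pos h]
    exact InnerProductSpace.toDual_symm_apply
  have h2 : ⟪g, Tmap μ φ ξ⟫ = (starRingEnd ℂ) ⟪Tmap μ φ ξ, g⟫ := (inner_conj_symm _ _).symm
  rw [h2, h1, ← integral_conj]
  congr 1; funext x
  simp [map_mul]

theorem memV_zero (μ : Measure X) (φ : X → H) : MemV μ φ (0 : X → ℂ) := by
  refine ⟨measurable_const, fun g => ?_, 0, fun g => ?_⟩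
  · simpa using integrable_zero X ℂ μ
  · simp

theorem memV_add {μ : Measure X} {φ : X → H} {ξ η : X → ℂ} (hξ : MemV μ φ ξ)
    (hη : MemV μ φ η) : MemV μ φ (ξ + η) := by
  obtain ⟨m1, i1, c1, b1⟩ := hξ
  obtain ⟨m2, i2, c2, b2⟩ := hη
  refine ⟨m1.add m2, fun g => ?_, c1 + c2, fun g => ?_⟩
  · refine ((i1 g).add (i2 g)).congr (ae_of_all _ fun x => ?_)
    simp [add_mul]
  · have he : ∫ x, (ξ + η) x * ⟪g, φ x⟫ ∂μ
        = (∫ x, ξ x * ⟪g, φ x⟫ ∂μ) + ∫ x, η x * ⟪g, φ x⟫ ∂μ := by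
      rw [← integral_add (i1 g) (i2 g)]
      simp [add_mul]
    rw [he, add_mul]
    exact (norm_add_le _ _).trans (add_le_add (b1 g) (b2 g))

theorem memV_smul {μ : Measure X} {φ : X → H} (c : ℂ) {ξ : X → ℂ} (hξ : MemV μ φ ξ) :
    MemV μ φ (c • ξ) := by
  obtain ⟨m1, i1, c1, b1⟩ := hξ
  refine ⟨m1.const_smul c, fun g => ?_, ‖c‖ * c1, fun g => ?_⟩
  · simpa [smul_eq_mul, mul_assoc] using (i1 g).const_mul c
  · have he : ∫ x, (c • ξ) x * ⟪g, φ x⟫ ∂μ = c * ∫ x, ξ x * ⟪g, φ x⟫ ∂μ := by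
      rw [← integral_const_mul]
      simp [mul_assoc]
    rw [he, norm_mul, mul_assoc]
    exact mul_le_mul_of_nonneg_left (b1 g) (norm_nonneg c)

theorem memV_sub {μ : Measure X} {φ : X → H} {ξ η : X → ℂ} (hξ : MemV μ φ ξ)
    (hη : MemV μ φ η) : MemV μ φ (ξ - η) := by
  have h := memV_add hξ (memV_smul (-1 : ℂ) hη)
  simpa [sub_eq_add_neg, neg_one_smul] using h

theorem Tmap_zero (μ : Measure X) (φ : X → H) : Tmap μ φ (0 : X → ℂ) = 0 := by
  apply ext_inner_left ℂ
  intro g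
  rw [inner_Tmap (memV_zero μ φ)]
  simp

theorem Tmap_add {μ : Measure X} {φ : X → H} {ξ η : X → ℂ} (hξ : MemV μ φ ξ)
    (hη : MemV μ φ η) : Tmap μ φ (ξ + η) = Tmap μ φ ξ + Tmap μ φ η := by
  apply ext_inner_left ℂ
  intro g
  rw [inner_add_right, inner_Tmap (memV_add hξ hη), inner_Tmap hξ, inner_Tmap hη,
    ← integral_add (hξ.2.1 g) (hη.2.1 g)]
  simp [add_mul]

theorem Tmap_smul {μ : Measure X} {φ : X → H} (c : ℂ) {ξ : X → ℂ} (hξ : MemV μ φ ξ) :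
    Tmap μ φ (c • ξ) = c • Tmap μ φ ξ := by
  apply ext_inner_left ℂ
  intro g
  rw [inner_smul_right, inner_Tmap (memV_smul c hξ), inner_Tmap hξ, ← integral_const_mul]
  simp [mul_assoc]

theorem Tmap_sub {μ : Measure X} {φ : X → H} {ξ η : X → ℂ} (hξ : MemV μ φ ξ)
    (hη : MemV μ φ η) : Tmap μ φ (ξ - η) = Tmap μ φ ξ - Tmap μ φ η := by
  apply ext_inner_left ℂ
  intro g
  rw [inner_sub_right, inner_Tmap (memV_sub hξ hη), inner_Tmap hξ, inner_Tmap hη,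
    ← integral_sub (hξ.2.1 g) (hη.2.1 g)]
  simp [sub_mul]

theorem iSup_inner_norm (v : H) :
    (⨆ g : {g : H // ‖g‖ ≤ 1}, ‖⟪(g : H), v⟫‖) = ‖v‖ := by
  haveI : Nonempty {g : H // ‖g‖ ≤ 1} := ⟨⟨0, by simp⟩⟩
  have hbdd : ∀ g : {g : H // ‖g‖ ≤ 1}, ‖⟪(g : H), v⟫‖ ≤ ‖v‖ := fun g =>
    (norm_inner_le_norm _ _).trans (by nlinarith [g.2, norm_nonneg v, norm_nonneg (g : H)])
  apply le_antisymm (ciSup_le hbdd)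
  rcases eq_or_ne v 0 with rfl | hv
  · simp
  · have hvpos : (0 : ℝ) < ‖v‖ := norm_pos_iff.2 hv
    have h1 : ‖((‖v‖⁻¹ : ℝ) : ℂ) • v‖ ≤ 1 := by
      rw [norm_smul]
      simp [abs_of_nonneg (le_of_lt (inv_pos.2 hvpos)), inv_mul_cancel₀ (ne_of_gt hvpos)]
    have h2 := le_ciSup (f := fun g : {g : H // ‖g‖ ≤ 1} => ‖⟪(g : H), v⟫‖)
      ⟨‖v‖, by rintro r ⟨g, rfl⟩; exact hbdd g⟩ ⟨((‖v‖⁻¹ : ℝ) : ℂ) • v, h1⟩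
    have h3 : ‖⟪(((‖v‖⁻¹ : ℝ) : ℂ) • v : H), v⟫‖ = ‖v‖ := by
      rw [inner_smul_left]
      rw [norm_mul, @inner_self_eq_norm_sq_to_K ℂ]
      have : ‖(starRingEnd ℂ) ((‖v‖⁻¹ : ℝ) : ℂ)‖ = ‖v‖⁻¹ := by
        rw [RCLike.norm_conj, Complex.norm_real, Real.norm_eq_abs,
          abs_of_nonneg (inv_nonneg.2 (norm_nonneg v))]
      rw [this]
      rw [norm_pow, RCLike.norm_ofReal, abs_of_nonneg (norm_nonneg v)]
      field_simp
    rw [h3] at h2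
    exact h2

theorem Vnorm_eq {μ : Measure X} {φ : X → H} {ξ : X → ℂ} (h : MemV μ φ ξ) :
    Vnorm μ φ ξ = ‖Tmap μ φ ξ‖ := by
  rw [Vnorm, ← iSup_inner_norm (Tmap μ φ ξ)]
  congr 1
  funext g
  rw [inner_Tmap h]

theorem dualIndex_nonempty (μ : Measure X) (φ : X → H) :
    Nonempty {ξ : X → ℂ // MemV μ φ ξ ∧ Vnorm μ φ ξ ≤ 1} :=
  ⟨⟨0, memV_zero μ φ, by rw [Vnorm_eq (memV_zero μ φ), Tmap_zero]; simp⟩⟩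

theorem norm_F_le {μ : Measure X} {φ : X → H} {F : (X → ℂ) → ℂ} {g : H}
    (hrep : ∀ ξ, MemV μ φ ξ → F ξ = ∫ x, ξ x * ⟪g, φ x⟫ ∂μ)
    (ξ : {ξ : X → ℂ // MemV μ φ ξ ∧ Vnorm μ φ ξ ≤ 1}) : ‖F ξ.1‖ ≤ ‖g‖ := by
  rw [hrep ξ.1 ξ.2.1, ← inner_Tmap ξ.2.1 g]
  have h1 := norm_inner_le_norm (𝕜 := ℂ) g (Tmap μ φ ξ.1)
  have h2 : ‖Tmap μ φ ξ.1‖ ≤ 1 := by rw [← Vnorm_eq ξ.2.1]; exact ξ.2.2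
  nlinarith [norm_nonneg g, norm_nonneg (Tmap μ φ ξ.1)]

theorem dualNorm_bdd {μ : Measure X} {φ : X → H} {F : (X → ℂ) → ℂ} {g : H}
    (hrep : ∀ ξ, MemV μ φ ξ → F ξ = ∫ x, ξ x * ⟪g, φ x⟫ ∂μ) :
    BddAbove (Set.range fun ξ : {ξ : X → ℂ // MemV μ φ ξ ∧ Vnorm μ φ ξ ≤ 1} => ‖F ξ.1‖) := by
  refine ⟨‖g‖, ?_⟩
  rintro r ⟨ξ, rfl⟩
  exact norm_F_le hrep ξ

theorem dualNorm_rep_le {μ : Measure X} {φ : X → H} {F : (X → ℂ) → ℂ} {g : H}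
    (hrep : ∀ ξ, MemV μ φ ξ → F ξ = ∫ x, ξ x * ⟪g, φ x⟫ ∂μ) :
    DualNorm μ φ F ≤ ‖g‖ := by
  haveI := dualIndex_nonempty μ φ
  exact ciSup_le (norm_F_le hrep)

theorem dualNorm_rep_ge {μ : Measure X} {φ : X → H} {g : H}
    (hg : g ∈ closure (Tran μ φ)) {F : (X → ℂ) → ℂ}
    (hrep : ∀ ξ, MemV μ φ ξ → F ξ = ∫ x, ξ x * ⟪g, φ x⟫ ∂μ) :
    ‖g‖ ≤ DualNorm μ φ F := by
  haveI := dualIndex_nonempty μ φ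
  have hD0 : 0 ≤ DualNorm μ φ F := by
    obtain ⟨ξ0⟩ := dualIndex_nonempty μ φ
    exact (norm_nonneg _).trans (le_ciSup (dualNorm_bdd hrep) ξ0)
  rcases eq_or_lt_of_le (norm_nonneg g) with hg0 | hgpos
  · rw [← hg0]; exact hD0
  apply le_of_forall_pos_le_add
  intro δ hδ
  set a := ‖g‖ with ha
  set ε := min (δ / 2) (a / 2) with hε
  have hεpos : 0 < ε := lt_min (by linarith) (by linarith)
  have hεδ : ε ≤ δ / 2 := min_le_left _ _
  have hεa : ε ≤ a / 2 := min_le_right _ _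
  obtain ⟨h, hhmem, hdist⟩ := Metric.mem_closure_iff.1 hg ε hεpos
  obtain ⟨ξ, hξmem, rfl⟩ := hhmem
  rw [dist_eq_norm] at hdist
  set t := ‖Tmap μ φ ξ‖ with ht
  have ht1 : a - ε ≤ t := by
    have := norm_sub_norm_le g (Tmap μ φ ξ)
    linarith
  have ht2 : t ≤ a + ε := by
    have := norm_le_norm_add_norm_sub' (Tmap μ φ ξ) g
    have h2 : ‖Tmap μ φ ξ - g‖ = ‖g - Tmap μ φ ξ‖ := norm_sub_rev _ _
    linarith [this, h2.le]
  have htpos : 0 < t := by linarith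
  set ξ' : X → ℂ := ((t⁻¹ : ℝ) : ℂ) • ξ with hξ'
  have hmem' : MemV μ φ ξ' := memV_smul _ hξmem
  have hT' : Tmap μ φ ξ' = ((t⁻¹ : ℝ) : ℂ) • Tmap μ φ ξ := Tmap_smul _ hξmem
  have hV' : Vnorm μ φ ξ' ≤ 1 := by
    rw [Vnorm_eq hmem', hT', norm_smul, Complex.norm_real, Real.norm_eq_abs,
      abs_of_nonneg (inv_nonneg.2 htpos.le), ← ht, inv_mul_cancel₀ (ne_of_gt htpos)]
  have hFval : ‖F ξ'‖ = t⁻¹ * ‖⟪g, Tmap μ φ ξ⟫‖ := by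
    rw [hrep ξ' hmem', ← inner_Tmap hmem' g, hT', inner_smul_right, norm_mul,
      Complex.norm_real, Real.norm_eq_abs, abs_of_nonneg (inv_nonneg.2 htpos.le)]
  have hinner : a ^ 2 - a * ε ≤ ‖⟪g, Tmap μ φ ξ⟫‖ := by
    have he : ⟪g, Tmap μ φ ξ⟫ = ⟪g, g⟫ + ⟪g, Tmap μ φ ξ - g⟫ := by
      rw [← inner_add_right]; congr 1; abel
    have h1 : ‖⟪g, g⟫‖ = a ^ 2 := by
      rw [@inner_self_eq_norm_sq_to_K ℂ, norm_pow, RCLike.norm_ofReal,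
        abs_of_nonneg (norm_nonneg g)]
    have h2 : ‖⟪g, Tmap μ φ ξ - g⟫‖ ≤ a * ε := by
      have := norm_inner_le_norm (𝕜 := ℂ) g (Tmap μ φ ξ - g)
      have h3 : ‖Tmap μ φ ξ - g‖ = ‖g - Tmap μ φ ξ‖ := norm_sub_rev _ _
      nlinarith [norm_nonneg g]
    calc a ^ 2 - a * ε ≤ ‖⟪g, g⟫‖ - ‖⟪g, Tmap μ φ ξ - g⟫‖ := by rw [h1]; linarith
      _ ≤ ‖⟪g, g⟫ + ⟪g, Tmap μ φ ξ - g⟫‖ := by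
          have := norm_add_le (⟪g, g⟫ + ⟪g, Tmap μ φ ξ - g⟫) (-⟪g, Tmap μ φ ξ - g⟫)
          simp only [add_neg_cancel_right, norm_neg] at this
          linarith
      _ = ‖⟪g, Tmap μ φ ξ⟫‖ := by rw [← he]
  have hDge : ‖F ξ'‖ ≤ DualNorm μ φ F := le_ciSup (dualNorm_bdd hrep) ⟨ξ', hmem', hV'⟩
  by_contra hcon
  push_neg at hcon
  have hFlt : ‖F ξ'‖ < a - δ := by linarith
  have h5 : ‖⟪g, Tmap μ φ ξ⟫‖ = t * ‖F ξ'‖ := by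
    rw [hFval]; field_simp
  nlinarith [hinner, ht2, htpos, hεδ, hεa, hδ, hgpos]

theorem rep_isBdd (μ : Measure X) (φ : X → H) (g : H) :
    IsBddLinearFunctional μ φ (fun ξ => ∫ x, ξ x * ⟪g, φ x⟫ ∂μ) := by
  refine ⟨fun ξ η hξ hη => ?_, fun c ξ hξ => ?_, fun ξ η hξ hη h0 => ?_, ‖g‖, fun ξ hξ => ?_⟩
  · rw [← integral_add (hξ.2.1 g) (hη.2.1 g)]
    simp [add_mul]
  · rw [← integral_const_mul]
    simp [mul_assoc]
  · have hTeq : Tmap μ φ ξ = Tmap μ φ η := by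
      have := Tmap_sub hξ hη
      rw [h0] at this
      exact (sub_eq_zero.1 this.symm)
    simp only
    rw [← inner_Tmap hξ g, ← inner_Tmap hη g, hTeq]
  · simp only
    rw [← inner_Tmap hξ g, Vnorm_eq hξ]
    exact norm_inner_le_norm (𝕜 := ℂ) _ _

theorem statement5' (μ : Measure X) (φ : X → H)
    (F : (X → ℂ) → ℂ) (hF : IsBddLinearFunctional μ φ F) :
    (∃ g : H, g ∈ closure (Tran μ φ) ∧
        (∀ ξ, MemV μ φ ξ → F ξ = ∫ x, ξ x * ⟪g, φ x⟫ ∂μ) ∧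
        DualNorm μ φ F = ‖g‖ ∧
        ∀ g' : H, g' ∈ closure (Tran μ φ) →
          (∀ ξ, MemV μ φ ξ → F ξ = ∫ x, ξ x * ⟪g', φ x⟫ ∂μ) → g' = g) ∧
    (∀ g : H, IsBddLinearFunctional μ φ (fun ξ => ∫ x, ξ x * ⟪g, φ x⟫ ∂μ) ∧
        DualNorm μ φ (fun ξ => ∫ x, ξ x * ⟪g, φ x⟫ ∂μ) ≤ ‖g‖ ∧
        (g ∈ Tran μ φ → DualNorm μ φ (fun ξ => ∫ x, ξ x * ⟪g, φ x⟫ ∂μ) = ‖g‖)) := by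
  classical
  constructor
  · -- the submodule M with carrier Tran μ φ
    obtain ⟨hF1, hF2, hF3, cF, hFb⟩ := hF
    have wd : ∀ ξ η, MemV μ φ ξ → MemV μ φ η → Tmap μ φ ξ = Tmap μ φ η → F ξ = F η := by
      intro ξ η hξ hη hT
      exact hF3 ξ η hξ hη (by rw [Tmap_sub hξ hη, hT, sub_self])
    set M : Submodule ℂ H :=
      { carrier := Tran μ φ
        add_mem' := by
          rintro a b ⟨ξ, hξ, rfl⟩ ⟨η, hη, rfl⟩
          exact ⟨ξ + η, memV_add hξ hη, Tmap_add hξ hη⟩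
        zero_mem' := ⟨0, memV_zero μ φ, Tmap_zero μ φ⟩
        smul_mem' := by
          rintro c a ⟨ξ, hξ, rfl⟩
          exact ⟨c • ξ, memV_smul c hξ, Tmap_smul c hξ⟩ } with hM
    have hhm : ∀ h : M, ∃ ξ, MemV μ φ ξ ∧ Tmap μ φ ξ = (h : H) := fun h => h.2
    choose rep hrep1 hrep2 using hhm
    have ℓadd : ∀ a b : M, F (rep (a + b)) = F (rep a) + F (rep b) := by
      intro a b
      have h1 : Tmap μ φ (rep (a + b)) = Tmap μ φ (rep a + rep b) := by
        rw [Tmap_add (hrep1 a) (hrep1 b), hrep2, hrep2, hrep2]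
        rfl
      rw [wd _ _ (hrep1 (a + b)) (memV_add (hrep1 a) (hrep1 b)) h1,
        hF1 _ _ (hrep1 a) (hrep1 b)]
    have ℓsmul : ∀ (c : ℂ) (a : M), F (rep (c • a)) = c * F (rep a) := by
      intro c a
      have h1 : Tmap μ φ (rep (c • a)) = Tmap μ φ (c • rep a) := by
        rw [Tmap_smul c (hrep1 a), hrep2, hrep2]
        rfl
      rw [wd _ _ (hrep1 (c • a)) (memV_smul c (hrep1 a)) h1, hF2 c _ (hrep1 a)]
    set ℓ : M →L[ℂ] ℂ := LinearMap.mkContinuousOfExistsBound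
      { toFun := fun h => F (rep h)
        map_add' := ℓadd
        map_smul' := ℓsmul }
      ⟨cF, fun h => by
        simp only [LinearMap.coe_mk, AddHom.coe_mk]
        have := hFb (rep h) (hrep1 h)
        rw [Vnorm_eq (hrep1 h), hrep2 h] at this
        exact this⟩ with hℓ
    obtain ⟨G, hGext, -⟩ := exists_extension_norm_eq M ℓ
    set g₀ : H := (InnerProductSpace.toDual ℂ H).symm G with hg₀
    set K := M.topologicalClosure with hK
    haveI : CompleteSpace K := (Submodule.isClosed_topologicalClosure M).completeSpace_coe
    set g : H := (K.orthogonalProjectionOnto g₀ : H) with hgdef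
    have hKset : (K : Set H) = closure (Tran μ φ) := Submodule.topologicalClosure_coe M
    have hgK : g ∈ K := (K.orthogonalProjectionOnto g₀).2
    have hgmem : g ∈ closure (Tran μ φ) := hKset ▸ hgK
    have hproj : ∀ h ∈ K, ⟪g₀, h⟫ = ⟪g, h⟫ := by
      intro h hh
      have horth := Submodule.sub_starProjection_mem_orthogonal (K := K) g₀
      have h0 : ⟪g₀ - g, h⟫ = 0 := (Submodule.mem_orthogonal' K _).1 horth h hh
      rw [inner_sub_left, sub_eq_zero] at h0
      exact h0
    have hFrep : ∀ ξ, MemV μ φ ξ → F ξ = ∫ x, ξ x * ⟪g, φ x⟫ ∂μ := by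
      intro ξ hξ
      have hTmem : Tmap μ φ ξ ∈ M := ⟨ξ, hξ, rfl⟩
      set h : M := ⟨Tmap μ φ ξ, hTmem⟩ with hh
      have h1 : F ξ = F (rep h) := wd _ _ hξ (hrep1 h) (by rw [hrep2 h])
      have h2 : F (rep h) = G (Tmap μ φ ξ) := (hGext h).symm
      have h3 : G (Tmap μ φ ξ) = ⟪g₀, Tmap μ φ ξ⟫ :=
        (InnerProductSpace.toDual_symm_apply).symm
      have h4 : ⟪g₀, Tmap μ φ ξ⟫ = ⟪g, Tmap μ φ ξ⟫ :=
        hproj _ (Submodule.le_topologicalClosure M hTmem)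
      rw [h1, h2, h3, h4, inner_Tmap hξ]
    refine ⟨g, hgmem, hFrep,
      le_antisymm (dualNorm_rep_le hFrep) (dualNorm_rep_ge hgmem hFrep), ?_⟩
    intro g' hg' hrep'
    have hg'K : g' ∈ K := by
      rw [← SetLike.mem_coe, hKset]
      exact hg'
    have hsub : g' - g ∈ K := Submodule.sub_mem K hg'K hgK
    have hozero : ∀ h ∈ closure (Tran μ φ), ⟪g' - g, h⟫ = 0 := by
      intro h hh
      have hcl : closure (Tran μ φ) ⊆ {y : H | ⟪g' - g, y⟫ = 0} := by
        apply closure_minimal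
        · rintro _ ⟨ξ, hξ, rfl⟩
          have e1 : ⟪g', Tmap μ φ ξ⟫ = F ξ := by rw [hrep' ξ hξ, inner_Tmap hξ]
          have e2 : ⟪g, Tmap μ φ ξ⟫ = F ξ := by rw [hFrep ξ hξ, inner_Tmap hξ]
          simp only [Set.mem_setOf_eq, inner_sub_left, e1, e2, sub_self]
        · exact isClosed_eq (continuous_const.inner continuous_id) continuous_const
      exact hcl hh
    have hsub' : g' - g ∈ closure (Tran μ φ) := by
      rw [← hKset]
      exact hsub
    have hz := hozero (g' - g) hsub'
    exact sub_eq_zero.1 (inner_self_eq_zero.1 hz)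
  · intro g
    refine ⟨rep_isBdd μ φ g, dualNorm_rep_le (fun ξ _ => rfl), fun hg => ?_⟩
    exact le_antisymm (dualNorm_rep_le (fun ξ _ => rfl))
      (dualNorm_rep_ge (subset_closure hg) (fun ξ _ => rfl))

/-- Let `φ` be weakly measurable. Every continuous linear functional `F` on
`V_φ(X,μ)` is represented by a unique `g` in the closure of the range of `T̂_φ` via
`F([ξ]_φ) = ∫ ξ(x) ⟨φ(x),g⟩ dμ(x)`, with `‖F‖_{φ*} = ‖g‖`. Conversely every `g ∈ H` defines a
bounded linear functional `F` this way with `‖F‖_{φ*} ≤ ‖g‖`, with equality when `g` is in the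
range of `T̂_φ`. -/
theorem statement5 (μ : Measure X) [μ.Regular] (φ : X → H) (hφ : WeaklyMeasurable φ)
    (F : (X → ℂ) → ℂ) (hF : IsBddLinearFunctional μ φ F) :
    (∃ g : H, g ∈ closure (Tran μ φ) ∧
        (∀ ξ, MemV μ φ ξ → F ξ = ∫ x, ξ x * ⟪g, φ x⟫ ∂μ) ∧
        DualNorm μ φ F = ‖g‖ ∧
        ∀ g' : H, g' ∈ closure (Tran μ φ) →
          (∀ ξ, MemV μ φ ξ → F ξ = ∫ x, ξ x * ⟪g', φ x⟫ ∂μ) → g' = g) ∧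
    (∀ g : H, IsBddLinearFunctional μ φ (fun ξ => ∫ x, ξ x * ⟪g, φ x⟫ ∂μ) ∧
        DualNorm μ φ (fun ξ => ∫ x, ξ x * ⟪g, φ x⟫ ∂μ) ≤ ‖g‖ ∧
        (g ∈ Tran μ φ → DualNorm μ φ (fun ξ => ∫ x, ξ x * ⟪g, φ x⟫ ∂μ) = ‖g‖)) :=
  statement5' μ φ F hF
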